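/- Let (X, E, w, T) be a finite weighted directed graph with nonnegative edge weights w : E → ℝ≥0 and target set T ⊆ X. Define the Bellman operator Φ on valuations d : X → [0,∞] by Φ(d)(x) = 0 if x ∈ T, and Φ(d)(x) = min over edges (x,x') ∈ E of (w(x,x') + d(x')) otherwise (with min ∅ = ∞). Then Φ is monotone, and its greatest fixed point νΦ assigns to each state x the infimum over all finite paths from x to a target state of the total weight of the path. -/

import Mathlib

open scoped NNReal ENNReal

/-- A path from `x` to the target set `T` along edges `E`, represented as the
list x = x_n, x_{n-1}, …, x_0 with x_0 ∈ T and consecutive states related by E. -/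
def IsSPPath {X : Type*} (E : X → X → Prop) (T : Set X) (x : X) (l : List X) : Prop :=
  l ≠ [] ∧ l.head? = some x ∧ (∃ z ∈ T, l.getLast? = some z) ∧ l.Chain' E

/-- Total weight of a path: the sum of the weights of its edges. -/
noncomputable def pathWeight {X : Type*} (w : X → X → ℝ≥0) : List X → ℝ≥0∞
  | [] => 0
  | [_] => 0
  | a :: b :: l => (w a b : ℝ≥0∞) + pathWeight w (b :: l)

lemma isSPPath_single {X : Type*} (E : X → X → Prop) (T : Set X) {x : X} (hx : x ∈ T) :
    IsSPPath E T x [x] :=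
  ⟨by simp, by simp, ⟨x, hx, by simp⟩, List.isChain_singleton x⟩

lemma isSPPath_cases {X : Type*} {E : X → X → Prop} {T : Set X} {x : X} {l : List X}
    (h : IsSPPath E T x l) (hx : x ∉ T) :
    ∃ y rest, l = x :: y :: rest ∧ E x y ∧ IsSPPath E T y (y :: rest) := by
  obtain ⟨hne, hhead, ⟨z, hz, hlast⟩, hchain⟩ := h
  match l, hne with
  | [a], _ =>
    simp at hhead hlast
    subst hhead; subst hlast; exact absurd hz hx
  | a :: b :: rest, _ =>
    simp at hhead; subst hhead
    simp only [List.Chain', List.isChain_cons_cons] at hchain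
    exact ⟨b, rest, rfl, hchain.1,
      ⟨by simp, by simp, ⟨z, hz, by simpa using hlast⟩, hchain.2⟩⟩

lemma isSPPath_cons {X : Type*} {E : X → X → Prop} {T : Set X} {x y : X} {l : List X}
    (hxy : E x y) (h : IsSPPath E T y l) : IsSPPath E T x (x :: l) := by
  obtain ⟨hne, hhead, ⟨z, hz, hlast⟩, hchain⟩ := h
  match l, hne with
  | b :: rest, _ =>
    simp at hhead; subst hhead
    exact ⟨by simp, by simp, ⟨z, hz, by simpa using hlast⟩,
      List.isChain_cons_cons.2 ⟨hxy, hchain⟩⟩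

/-- The Bellman operator of a finite weighted graph with nonnegative weights is
monotone, and its greatest fixed point assigns to each state the infimum of the
total weights of all finite paths from that state to a target state. -/
theorem stmt11 {X : Type} [Fintype X] (E : X → X → Prop) (w : X → X → ℝ≥0) (T : Set X)
    (Φ : (X → ℝ≥0∞) → (X → ℝ≥0∞))
    (hΦT : ∀ d x, x ∈ T → Φ d x = 0)
    (hΦE : ∀ d x, x ∉ T → Φ d x = ⨅ (y : X) (_ : E x y), ((w x y : ℝ≥0∞) + d y)) :
    Monotone Φ ∧
      ∃ dstar : X → ℝ≥0∞, Φ dstar = dstar ∧ (∀ e, Φ e = e → e ≤ dstar) ∧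
        ∀ x : X, dstar x = ⨅ l : {l : List X // IsSPPath E T x l}, pathWeight w l.1 := by
  set dstar : X → ℝ≥0∞ :=
    fun x => ⨅ l : {l : List X // IsSPPath E T x l}, pathWeight w l.1 with hd
  have hmono : Monotone Φ := by
    intro d d' hdd x
    by_cases hx : x ∈ T
    · simp [hΦT d x hx, hΦT d' x hx]
    · rw [hΦE d x hx, hΦE d' x hx]
      exact iInf_mono fun y => iInf_mono fun _ => add_le_add le_rfl (hdd y)
  have hdT : ∀ x ∈ T, dstar x = 0 := by
    intro x hx
    refine le_antisymm ?_ zero_le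
    have := iInf_le (fun l : {l : List X // IsSPPath E T x l} => pathWeight w l.1)
      ⟨[x], isSPPath_single E T hx⟩
    simpa [pathWeight] using this
  have hfix : Φ dstar = dstar := by
    funext x
    by_cases hx : x ∈ T
    · rw [hΦT dstar x hx, hdT x hx]
    · rw [hΦE dstar x hx]
      refine le_antisymm ?_ ?_
      · -- Φ dstar x ≤ dstar x
        refine le_iInf fun l => ?_
        obtain ⟨y, rest, hl, hxy, hyp⟩ := isSPPath_cases l.2 hx
        calc ⨅ (y : X) (_ : E x y), ((w x y : ℝ≥0∞) + dstar y)
            ≤ (w x y : ℝ≥0∞) + dstar y := iInf₂_le y hxy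
          _ ≤ (w x y : ℝ≥0∞) + pathWeight w (y :: rest) := by
              gcongr
              exact iInf_le (fun l : {l : List X // IsSPPath E T y l} => pathWeight w l.1)
                ⟨y :: rest, hyp⟩
          _ = pathWeight w l.1 := by rw [hl]; rfl
      · -- dstar x ≤ Φ dstar x
        refine le_iInf fun y => le_iInf fun hxy => ?_
        rw [hd]
        simp only
        rw [ENNReal.add_iInf]
        refine le_iInf fun l => ?_
        obtain ⟨lv, hlp⟩ := l
        obtain ⟨b, rest, hl⟩ := List.exists_cons_of_ne_nil hlp.1
        have hb : b = y := by
          have := hlp.2.1; rw [hl] at this; simpa using this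
        subst hl; subst hb
        exact iInf_le_of_le ⟨x :: b :: rest, isSPPath_cons hxy hlp⟩ le_rfl
  refine ⟨hmono, dstar, hfix, ?_, fun x => rfl⟩
  intro e he
  have key : ∀ l x, IsSPPath E T x l → e x ≤ pathWeight w l := by
    intro l
    induction l with
    | nil => intro x h; exact absurd rfl h.1
    | cons a t ih =>
      intro x h
      have hax : a = x := by
        have := h.2.1; simpa using this
      subst hax
      by_cases hx : a ∈ T
      · rw [← he, hΦT e a hx]; exact zero_le
      · obtain ⟨y, rest, hl, hxy, hyp⟩ := isSPPath_cases h hx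
        have ht : t = y :: rest := by
          injection hl
        subst ht
        calc e a = Φ e a := (congrFun he a).symm
          _ ≤ (w a y : ℝ≥0∞) + e y := by rw [hΦE e a hx]; exact iInf₂_le y hxy
          _ ≤ (w a y : ℝ≥0∞) + pathWeight w (y :: rest) := by
              gcongr; exact ih y hyp
          _ = pathWeight w (a :: y :: rest) := rfl
  intro x
  exact le_iInf fun l => key l.1 x l.2
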